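/- Let Σ and Γ be finite alphabets and let π : Σ → Γ be a surjective mapping, extended letterwise (entrywise) to arrays and to array languages. Then for every z ∈ {h, p, r, c, rc} and every array pattern α, π(L_{Σ,z}(α)) = L_{Γ,z}(α). Consequently, each of the classes 𝓛_z is closed under projections. -/

import Mathlib

/-- A nonempty rectangular two-dimensional word (array) over `σ`. -/
structure Arr (σ : Type) : Type where
  rows : ℕ
  cols : ℕ
  rows_pos : 0 < rows
  cols_pos : 0 < cols
  entry : Fin rows → Fin cols → σ

namespace Arr

variable {σ γ : Type}

/-- Column concatenation: place `V` to the right of `U`; `none` if heights differ. -/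
def colCat (U V : Arr σ) : Option (Arr σ) :=
  if h : U.rows = V.rows then
    some { rows := U.rows
           cols := U.cols + V.cols
           rows_pos := U.rows_pos
           cols_pos := by have := U.cols_pos; omega
           entry := fun i j =>
             if hj : (j : ℕ) < U.cols then U.entry i ⟨j, hj⟩
             else V.entry (Fin.cast h i) ⟨(j : ℕ) - U.cols, by have := j.isLt; omega⟩ }
  else none

/-- Row concatenation: place `V` below `U`; `none` if widths differ. -/
def rowCat (U V : Arr σ) : Option (Arr σ) :=
  if h : U.cols = V.cols then
    some { rows := U.rows + V.rows
           cols := U.cols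
           rows_pos := by have := U.rows_pos; omega
           cols_pos := U.cols_pos
           entry := fun i j =>
             if hi : (i : ℕ) < U.rows then U.entry ⟨i, hi⟩ j
             else V.entry ⟨(i : ℕ) - U.rows, by have := i.isLt; omega⟩ (Fin.cast h j) }
  else none

/-- A two-dimensional morphism: compatible with both concatenations,
with "both sides undefined" counting as equal. -/
def IsMorphism (h : Arr σ → Arr γ) : Prop :=
  (∀ V W : Arr σ, Option.map h (colCat V W) = colCat (h V) (h W)) ∧
  (∀ V W : Arr σ, Option.map h (rowCat V W) = rowCat (h V) (h W))

/-- Concatenate a nonempty list of (possibly undefined) arrays with the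
given partial concatenation operation; `none` on the empty list. -/
def catListO (op : Arr σ → Arr σ → Option (Arr σ)) : List (Option (Arr σ)) → Option (Arr σ)
  | [] => none
  | [a] => a
  | a :: b :: rest => a.bind fun x => (catListO op (b :: rest)).bind fun y => op x y

/-- `g_{⦶,⊖}`: substitute and assemble, first column-concatenating each row,
then row-concatenating the rows. -/
def subCR {X : Type} (g : X → Arr σ) (α : Arr X) : Option (Arr σ) :=
  catListO rowCat (List.ofFn fun i : Fin α.rows =>
    catListO colCat (List.ofFn fun j : Fin α.cols => some (g (α.entry i j))))

/-- `g_{⊖,⦶}`: substitute and assemble, first row-concatenating each column,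
then column-concatenating the columns. -/
def subRC {X : Type} (g : X → Arr σ) (α : Arr X) : Option (Arr σ) :=
  catListO colCat (List.ofFn fun j : Fin α.cols =>
    catListO rowCat (List.ofFn fun i : Fin α.rows => some (g (α.entry i j))))

/-- A substitution is uniform if all images have the same dimensions. -/
def Uniform {X : Type} (g : X → Arr σ) : Prop :=
  ∃ m n : ℕ, ∀ x : X, (g x).rows = m ∧ (g x).cols = n

end Arr

open Arr

/-- The five modes of array pattern languages. -/
inductive Mode | h | p | r | c | rc
deriving DecidableEq

/-- The array pattern language of an array pattern (an array over the
variables `ℕ`) in each mode. -/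
def langOf (σ : Type) : Mode → Arr ℕ → Set (Arr σ)
  | Mode.h, α => {W | ∃ g : Arr ℕ → Arr σ, IsMorphism g ∧ g α = W}
  | Mode.p, α => {W | ∃ s : ℕ → Arr σ, subCR s α = some W ∧ subRC s α = some W}
  | Mode.r, α => {W | ∃ s : ℕ → Arr σ, subCR s α = some W}
  | Mode.c, α => {W | ∃ s : ℕ → Arr σ, subRC s α = some W}
  | Mode.rc, α =>
      {W | ∃ s : ℕ → Arr σ, subCR s α = some W} ∪ {W | ∃ s : ℕ → Arr σ, subRC s α = some W}

/-- The entrywise extension of a letter-to-letter map to arrays. -/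
def mapArr {σ Γ : Type} (π : σ → Γ) (W : Arr σ) : Arr Γ :=
  ⟨W.rows, W.cols, W.rows_pos, W.cols_pos, fun i j => π (W.entry i j)⟩


section Aux

variable {σ Γ : Type}

lemma mapArr_colCat (f : σ → Γ) (U V : Arr σ) :
    colCat (mapArr f U) (mapArr f V) = Option.map (mapArr f) (colCat U V) := by
  unfold colCat mapArr
  by_cases h : U.rows = V.rows
  · simp only [dif_pos h, Option.map_some, Option.some.injEq, Arr.mk.injEq, heq_eq_eq, true_and]
    funext i j
    rw [apply_dite f]
  · simp only [dif_neg h, Option.map_none]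

lemma mapArr_rowCat (f : σ → Γ) (U V : Arr σ) :
    rowCat (mapArr f U) (mapArr f V) = Option.map (mapArr f) (rowCat U V) := by
  unfold rowCat mapArr
  by_cases h : U.cols = V.cols
  · simp only [dif_pos h, Option.map_some, Option.some.injEq, Arr.mk.injEq, heq_eq_eq, true_and]
    funext i j
    rw [apply_dite f]
  · simp only [dif_neg h, Option.map_none]

lemma catListO_map (f : σ → Γ) (op : ∀ {τ : Type}, Arr τ → Arr τ → Option (Arr τ))
    (hop : ∀ U V : Arr σ, op (mapArr f U) (mapArr f V) = Option.map (mapArr f) (op U V)) :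
    ∀ l : List (Option (Arr σ)),
      catListO op (l.map (Option.map (mapArr f))) = Option.map (mapArr f) (catListO op l)
  | [] => rfl
  | [a] => by cases a <;> rfl
  | a :: b :: rest => by
    have ih := catListO_map f op hop (b :: rest)
    simp only [List.map_cons] at ih ⊢
    show (Option.map (mapArr f) a).bind _ = _
    cases a with
    | none => rfl
    | some x =>
      simp only [Option.map_some, Option.bind_some]
      show (catListO op (List.map (Option.map (mapArr f)) (b :: rest))).bind _
          = Option.map (mapArr f) ((some x).bind fun x =>
              (catListO op (b :: rest)).bind fun y => op x y)
      rw [List.map_cons, ih]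
      cases catListO op (b :: rest) with
      | none => rfl
      | some y => simp [hop x y]

lemma subCR_map (f : σ → Γ) (s : ℕ → Arr σ) (α : Arr ℕ) :
    subCR (fun x => mapArr f (s x)) α = Option.map (mapArr f) (subCR s α) := by
  unfold subCR
  rw [← catListO_map f (fun {_} => rowCat) (mapArr_rowCat f)]
  congr 1
  rw [List.map_ofFn]
  congr 1
  funext i
  show _ = Option.map (mapArr f) (catListO colCat _)
  rw [← catListO_map f (fun {_} => colCat) (mapArr_colCat f), List.map_ofFn]
  rfl

lemma subRC_map (f : σ → Γ) (s : ℕ → Arr σ) (α : Arr ℕ) :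
    subRC (fun x => mapArr f (s x)) α = Option.map (mapArr f) (subRC s α) := by
  unfold subRC
  rw [← catListO_map f (fun {_} => colCat) (mapArr_colCat f)]
  congr 1
  rw [List.map_ofFn]
  congr 1
  funext j
  show _ = Option.map (mapArr f) (catListO rowCat _)
  rw [← catListO_map f (fun {_} => rowCat) (mapArr_rowCat f), List.map_ofFn]
  rfl

lemma isMorphism_comp_map (f : σ → Γ) {g : Arr ℕ → Arr σ} (hg : IsMorphism g) :
    IsMorphism (fun β => mapArr f (g β)) := by
  constructor
  · intro V W
    rw [mapArr_colCat, ← hg.1, Option.map_map]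
    rfl
  · intro V W
    rw [mapArr_rowCat, ← hg.2, Option.map_map]
    rfl

lemma mapArr_mapArr_of_rightInv {f : σ → Γ} {r : Γ → σ} (hr : ∀ x, f (r x) = x)
    (W : Arr Γ) : mapArr f (mapArr r W) = W := by
  cases W
  simp only [mapArr, mk.injEq, heq_eq_eq, true_and]
  congr 1
  funext i j
  exact hr _

lemma image_subCR_set (f : σ → Γ) (hf : Function.Surjective f) (α : Arr ℕ) :
    mapArr f '' {W | ∃ s : ℕ → Arr σ, subCR s α = some W}
      = {W | ∃ s : ℕ → Arr Γ, subCR s α = some W} := by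
  obtain ⟨r, hr⟩ := hf.hasRightInverse
  ext W
  constructor
  · rintro ⟨V, ⟨s, hs⟩, rfl⟩
    exact ⟨fun x => mapArr f (s x), by rw [subCR_map, hs]; rfl⟩
  · rintro ⟨s, hs⟩
    refine ⟨mapArr r W, ⟨fun x => mapArr r (s x), ?_⟩, mapArr_mapArr_of_rightInv hr W⟩
    rw [subCR_map, hs]
    rfl

lemma image_subRC_set (f : σ → Γ) (hf : Function.Surjective f) (α : Arr ℕ) :
    mapArr f '' {W | ∃ s : ℕ → Arr σ, subRC s α = some W}
      = {W | ∃ s : ℕ → Arr Γ, subRC s α = some W} := by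
  obtain ⟨r, hr⟩ := hf.hasRightInverse
  ext W
  constructor
  · rintro ⟨V, ⟨s, hs⟩, rfl⟩
    exact ⟨fun x => mapArr f (s x), by rw [subRC_map, hs]; rfl⟩
  · rintro ⟨s, hs⟩
    refine ⟨mapArr r W, ⟨fun x => mapArr r (s x), ?_⟩, mapArr_mapArr_of_rightInv hr W⟩
    rw [subRC_map, hs]
    rfl

end Aux

/-- for a projection (surjective letter-to-letter map)
`π : Σ → Γ`, every mode `z` and every array pattern `α`,
`π(L_{Σ,z}(α)) = L_{Γ,z}(α)`; consequently each class is closed under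
projections. -/
theorem stmt10 {σ Γ : Type} [Fintype σ] [Fintype Γ] (π : σ → Γ)
    (hπ : Function.Surjective π) (z : Mode) :
    (∀ α : Arr ℕ, mapArr π '' langOf σ z α = langOf Γ z α) ∧
    (∀ L ∈ {L | ∃ α : Arr ℕ, L = langOf σ z α},
      mapArr π '' L ∈ {L | ∃ α : Arr ℕ, L = langOf Γ z α}) := by
  obtain ⟨r, hr⟩ := hπ.hasRightInverse
  have main : ∀ α : Arr ℕ, mapArr π '' langOf σ z α = langOf Γ z α := by
    intro α
    cases z with
    | h =>
      ext W
      constructor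
      · rintro ⟨V, ⟨g, hg, rfl⟩, rfl⟩
        exact ⟨fun β => mapArr π (g β), isMorphism_comp_map π hg, rfl⟩
      · rintro ⟨g, hg, rfl⟩
        exact ⟨mapArr r (g α), ⟨fun β => mapArr r (g β), isMorphism_comp_map r hg, rfl⟩,
          mapArr_mapArr_of_rightInv hr _⟩
    | p =>
      ext W
      constructor
      · rintro ⟨V, ⟨s, hs1, hs2⟩, rfl⟩
        exact ⟨fun x => mapArr π (s x), by rw [subCR_map, hs1]; rfl,
          by rw [subRC_map, hs2]; rfl⟩
      · rintro ⟨s, hs1, hs2⟩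
        refine ⟨mapArr r W, ⟨fun x => mapArr r (s x), ?_, ?_⟩,
          mapArr_mapArr_of_rightInv hr W⟩
        · rw [subCR_map, hs1]; rfl
        · rw [subRC_map, hs2]; rfl
    | r => exact image_subCR_set π hπ α
    | c => exact image_subRC_set π hπ α
    | rc =>
      show mapArr π '' (_ ∪ _) = _
      rw [Set.image_union, image_subCR_set π hπ α, image_subRC_set π hπ α]
      rfl
  exact ⟨main, fun L ⟨α, hL⟩ => ⟨α, by rw [hL, main α]⟩⟩
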